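/- Let A ⊆ [0,1]^m be a finite set, 0 < δ ≤ 1, M ≥ 1, and s ≥ 0 real numbers. Suppose that for every ball Q_r ⊆ [0,1]^m of radius r with δ ≤ r ≤ 1, one has #(A ∩ Q_r) ≤ M·(r/δ)^s. Then A can be partitioned into at most C·M^{C} subsets (C depending only on m and s) such that each subset A' satisfies #(A' ∩ Q_r) ≤ (r/δ)^s for every ball Q_r of radius r ∈ [δ,1]. -/

import Mathlib

open Finset Metric
open scoped Classical

namespace Stmt6

noncomputable section

variable {m : ℕ}

lemma ncard_inter (A : Finset (EuclideanSpace ℝ (Fin m))) (C : Set (EuclideanSpace ℝ (Fin m))) :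
    Set.ncard ((A : Set (EuclideanSpace ℝ (Fin m))) ∩ C) = (A.filter (fun x => x ∈ C)).card := by
  rw [← Set.ncard_coe_finset]; congr 1; ext z; simp

lemma abs_coord_le {x c : EuclideanSpace ℝ (Fin m)} {r : ℝ} (h : x ∈ closedBall c r) (i : Fin m) :
    |x i - c i| ≤ r := by
  have hd : dist x c ≤ r := mem_closedBall.1 h
  have h1 : dist (x i) (c i) ≤ dist x c := by
    rw [EuclideanSpace.dist_eq]
    have h2 : dist (x i) (c i) = Real.sqrt (dist (x i) (c i) ^ 2) := (Real.sqrt_sq dist_nonneg).symm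
    rw [h2]
    exact Real.sqrt_le_sqrt (Finset.single_le_sum (f := fun j => dist (x j) (c j) ^ 2)
      (fun j _ => sq_nonneg _) (mem_univ i))
  calc |x i - c i| = dist (x i) (c i) := (Real.dist_eq _ _).symm
    _ ≤ r := h1.trans hd

lemma dist_le_of_coords {x y : EuclideanSpace ℝ (Fin m)} {b : ℝ} (hb : 0 ≤ b)
    (h : ∀ i, |x i - y i| ≤ b) : dist x y ≤ Real.sqrt m * b := by
  rw [EuclideanSpace.dist_eq]
  have h1 : ∑ i, dist (x i) (y i) ^ 2 ≤ (m : ℝ) * b ^ 2 := by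
    calc ∑ i, dist (x i) (y i) ^ 2 ≤ ∑ _i : Fin m, b ^ 2 := by
          apply Finset.sum_le_sum; intro i _
          rw [Real.dist_eq]
          exact pow_le_pow_left₀ (abs_nonneg _) (h i) 2
      _ = (m : ℝ) * b ^ 2 := by simp [mul_comm]
  calc Real.sqrt (∑ i, dist (x i) (y i) ^ 2) ≤ Real.sqrt ((m : ℝ) * b ^ 2) := Real.sqrt_le_sqrt h1
    _ = Real.sqrt m * b := by
        rw [Real.sqrt_mul (Nat.cast_nonneg m), Real.sqrt_sq hb]

lemma abs_lt_one_of_floor_eq {a b : ℝ} (h : ⌊a⌋ = ⌊b⌋) : |a - b| < 1 := by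
  have h1 := Int.floor_le a; have h2 := Int.lt_floor_add_one a
  have h3 := Int.floor_le b; have h4 := Int.lt_floor_add_one b
  have hc : ((⌊a⌋ : ℤ) : ℝ) = ((⌊b⌋ : ℤ) : ℝ) := by rw [h]
  rw [abs_sub_lt_iff]; constructor <;> linarith

lemma floor_real_div (u : ℝ) (n : ℕ) (hn : 0 < n) : ⌊u / n⌋ = ⌊((⌊u⌋ : ℤ) : ℝ) / n⌋ := by
  have hn' : (0 : ℝ) < n := by exact_mod_cast hn
  set q := ⌊((⌊u⌋ : ℤ) : ℝ) / n⌋ with hq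
  have hql : (q : ℝ) ≤ ((⌊u⌋ : ℤ) : ℝ) / n := Int.floor_le _
  have hqu : ((⌊u⌋ : ℤ) : ℝ) / n < q + 1 := Int.lt_floor_add_one _
  have h1 : (q : ℝ) * n ≤ ((⌊u⌋ : ℤ) : ℝ) := by rw [← le_div_iff₀ hn']; exact hql
  have h2 : ((⌊u⌋ : ℤ) : ℝ) < (q + 1) * n := by rw [← div_lt_iff₀ hn']; exact hqu
  have h2' : (⌊u⌋ : ℤ) < (q + 1) * (n : ℤ) := by exact_mod_cast h2
  have h3 : ((⌊u⌋ : ℤ) : ℝ) + 1 ≤ ((q : ℝ) + 1) * (n : ℝ) := by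
    have : (⌊u⌋ : ℤ) + 1 ≤ (q + 1) * (n : ℤ) := h2'
    exact_mod_cast this
  have hu1 : (q : ℝ) ≤ u / n := by
    rw [le_div_iff₀ hn']
    have := Int.floor_le u
    linarith
  have hu2 : u / n < (q : ℝ) + 1 := by
    rw [div_lt_iff₀ hn']
    have := Int.lt_floor_add_one u
    linarith
  exact Int.floor_eq_iff.mpr ⟨hu1, hu2⟩

lemma floor_det {u v : ℝ} {j' j : ℕ} (h : j' ≤ j) (huv : ⌊(2:ℝ) ^ j * u⌋ = ⌊(2:ℝ) ^ j * v⌋) :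
    ⌊(2:ℝ) ^ j' * u⌋ = ⌊(2:ℝ) ^ j' * v⌋ := by
  have hp : 0 < 2 ^ (j - j') := Nat.pow_pos (by norm_num)
  have key : ∀ w : ℝ, (2:ℝ) ^ j' * w = ((2:ℝ) ^ j * w) / (((2 ^ (j - j') : ℕ)) : ℝ) := by
    intro w
    rw [eq_div_iff (by positivity)]
    push_cast
    rw [mul_right_comm, ← pow_add]
    congr 2
    omega
  calc ⌊(2:ℝ) ^ j' * u⌋ = ⌊((2:ℝ) ^ j * u) / (((2 ^ (j - j') : ℕ)) : ℝ)⌋ := by rw [← key u]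
    _ = ⌊((⌊(2:ℝ) ^ j * u⌋ : ℤ) : ℝ) / (((2 ^ (j - j') : ℕ)) : ℝ)⌋ := floor_real_div _ _ hp
    _ = ⌊((⌊(2:ℝ) ^ j * v⌋ : ℤ) : ℝ) / (((2 ^ (j - j') : ℕ)) : ℝ)⌋ := by rw [huv]
    _ = ⌊((2:ℝ) ^ j * v) / (((2 ^ (j - j') : ℕ)) : ℝ)⌋ := (floor_real_div _ _ hp).symm
    _ = ⌊(2:ℝ) ^ j' * v⌋ := by rw [← key v]

lemma nat_div_add (a L N : ℕ) (hN : 0 < N) : (a + L) / N ≤ a / N + L / N + 1 := by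
  have h1 : a % N + N * (a / N) = a := Nat.mod_add_div a N
  have h2 : L % N + N * (L / N) = L := Nat.mod_add_div L N
  have h3 : a % N < N := Nat.mod_lt _ hN
  have h4 : L % N < N := Nat.mod_lt _ hN
  have h5 : (a + L) / N < a / N + L / N + 2 := by
    rw [Nat.div_lt_iff_lt_mul hN]
    nlinarith
  omega

lemma lex_between {a b z : ℕ → ℤ} {n : ℕ} (hab : ∀ k, k < n → a k = b k)
    (h1 : toLex a ≤ toLex z) (h2 : toLex z ≤ toLex b) : ∀ k, k < n → z k = a k := by
  by_contra hcon
  push_neg at hcon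
  obtain ⟨k, hkn, hk⟩ := hcon
  have hex : ∃ k, z k ≠ a k := ⟨k, hk⟩
  classical
  set k₀ := Nat.find hex with hk₀
  have hk₀n : k₀ < n := lt_of_le_of_lt (Nat.find_le hk) hkn
  have hbelow : ∀ j, j < k₀ → z j = a j := fun j hj => by
    have := Nat.find_min hex hj; simpa using this
  have hk₀ne : z k₀ ≠ a k₀ := Nat.find_spec hex
  have hlt1 : toLex a < toLex z := lt_of_le_of_ne h1 (fun e => hk₀ne (by
    have : a = z := congrArg ofLex e
    rw [this]))
  have hlt2 : toLex z < toLex b := lt_of_le_of_ne h2 (fun e => by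
    have hzb : z = b := congrArg ofLex e
    exact hk₀ne (by rw [hzb]; exact (hab k₀ hk₀n).symm))
  obtain ⟨i, hib, hilt⟩ : ∃ i, (∀ j, j < i → a j = z j) ∧ a i < z i := hlt1
  have hik : i = k₀ := by
    rcases lt_trichotomy i k₀ with h | h | h
    · exact absurd ((hbelow i h).symm) (ne_of_lt hilt)
    · exact h
    · exact absurd (hib k₀ h).symm hk₀ne
  obtain ⟨i', hib', hilt'⟩ : ∃ i, (∀ j, j < i → z j = b j) ∧ z i < b i := hlt2
  have hik' : i' = k₀ := by
    rcases lt_trichotomy i' k₀ with h | h | h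
    · have : z i' = a i' := hbelow i' h
      have h2' : a i' = b i' := hab i' (lt_trans h hk₀n)
      rw [this, h2'] at hilt'
      exact absurd hilt' (lt_irrefl _)
    · exact h
    · have := hib' k₀ h
      rw [hab k₀ hk₀n] at hk₀ne
      exact absurd this hk₀ne
  rw [hik] at hilt
  rw [hik'] at hilt'
  rw [hab k₀ hk₀n] at hilt
  exact absurd (lt_trans hilt' hilt) (lt_irrefl _)

lemma residue_count {α τ : Type*} [LinearOrder τ] [DecidableEq α] (A S : Finset α) (hSA : S ⊆ A)
    (F : α → τ) (hinj : ∀ x ∈ A, ∀ y ∈ A, F x = F y → x = y)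
    (hint : ∀ x ∈ S, ∀ y ∈ S, ∀ z ∈ A, F x ≤ F z → F z ≤ F y → z ∈ S)
    (N t : ℕ) (hN : 0 < N) :
    (S.filter (fun x => (A.filter (fun y => F y < F x)).card % N = t)).card ≤ S.card / N + 2 := by
  classical
  set rA : α → ℕ := fun x => (A.filter (fun y => F y < F x)).card with hrA
  set TS := S.filter (fun x => rA x % N = t) with hTS
  rcases TS.eq_empty_or_nonempty with he | hne
  · rw [he]; simp
  have hSne : S.Nonempty := by
    obtain ⟨x, hx⟩ := hne
    exact ⟨x, Finset.mem_of_mem_filter x hx⟩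
  obtain ⟨x₀, hx₀S, hx₀min⟩ := Finset.exists_min_image S F hSne
  -- rA is strictly monotone in F on A
  have hmono : ∀ x ∈ A, ∀ y ∈ A, F x < F y → rA x < rA y := by
    intro x hx y hy hxy
    apply Finset.card_lt_card
    constructor
    · intro z hz
      rw [Finset.mem_filter] at hz ⊢
      exact ⟨hz.1, lt_trans hz.2 hxy⟩
    · intro hsub
      have : x ∈ A.filter (fun y' => F y' < F y) := Finset.mem_filter.2 ⟨hx, hxy⟩
      have := hsub this
      rw [Finset.mem_filter] at this
      exact absurd this.2 (lt_irrefl _)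
  have hrAinj : ∀ x ∈ S, ∀ y ∈ S, rA x = rA y → x = y := by
    intro x hx y hy hxy
    by_contra hne'
    have hFne : F x ≠ F y := fun e => hne' (hinj x (hSA hx) y (hSA hy) e)
    rcases lt_or_gt_of_ne hFne with h | h
    · exact absurd hxy (ne_of_lt (hmono x (hSA hx) y (hSA hy) h))
    · exact absurd hxy.symm (ne_of_lt (hmono y (hSA hy) x (hSA hx) h))
  -- range bound: for x in S, rA x₀ ≤ rA x ≤ rA x₀ + S.card - 1
  have hrange : ∀ x ∈ S, rA x₀ ≤ rA x ∧ rA x ≤ rA x₀ + (S.card - 1) := by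
    intro x hxS
    have hle : F x₀ ≤ F x := hx₀min x hxS
    constructor
    · rcases eq_or_lt_of_le hle with h | h
      · have : x₀ = x := hinj x₀ (hSA hx₀S) x (hSA hxS) h
        rw [this]
      · exact le_of_lt (hmono x₀ (hSA hx₀S) x (hSA hxS) h)
    · -- rA x ≤ rA x₀ + card of middle part
      have hsplit : rA x ≤ rA x₀ + (A.filter (fun y => F x₀ ≤ F y ∧ F y < F x)).card := by
        rw [hrA]
        have : A.filter (fun y => F y < F x) ⊆
            A.filter (fun y => F y < F x₀) ∪ A.filter (fun y => F x₀ ≤ F y ∧ F y < F x) := by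
          intro z hz
          rw [Finset.mem_filter] at hz
          rcases lt_or_ge (F z) (F x₀) with h | h
          · exact Finset.mem_union_left _ (Finset.mem_filter.2 ⟨hz.1, h⟩)
          · exact Finset.mem_union_right _ (Finset.mem_filter.2 ⟨hz.1, h, hz.2⟩)
        calc (A.filter (fun y => F y < F x)).card ≤ _ := Finset.card_le_card this
          _ ≤ _ := Finset.card_union_le _ _
    -- and the middle part ⊆ S \ {x}? no: ⊆ S.filter (F · < F x) ⊆ S.erase x
      have hmid : (A.filter (fun y => F x₀ ≤ F y ∧ F y < F x)).card ≤ S.card - 1 := by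
        have hsub : A.filter (fun y => F x₀ ≤ F y ∧ F y < F x) ⊆ S.erase x := by
          intro z hz
          rw [Finset.mem_filter] at hz
          have hzS : z ∈ S := hint x₀ hx₀S x hxS z hz.1 hz.2.1 (le_of_lt hz.2.2)
          apply Finset.mem_erase.2
          refine ⟨?_, hzS⟩
          intro e
          rw [e] at hz
          exact absurd hz.2.2 (lt_irrefl _)
        calc _ ≤ (S.erase x).card := Finset.card_le_card hsub
          _ = S.card - 1 := Finset.card_erase_of_mem hxS
      omega
  -- injection x ↦ rA x / N from TS into Icc (rA x₀ / N) ((rA x₀ + (S.card-1))/N)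
  have hinj2 : Set.InjOn (fun x => rA x / N) TS := by
    intro x hx y hy hxy
    simp only at hxy
    rw [hTS, Finset.mem_coe, Finset.mem_filter] at hx hy
    have : rA x = rA y := by
      have h1 : rA x = N * (rA x / N) + rA x % N := (Nat.div_add_mod _ _).symm
      have h2 : rA y = N * (rA y / N) + rA y % N := (Nat.div_add_mod _ _).symm
      rw [h1, h2, hxy, hx.2, hy.2]
    exact hrAinj x hx.1 y hy.1 this
  have hmaps : ∀ x ∈ TS, rA x / N ∈ Finset.Icc (rA x₀ / N) ((rA x₀ + (S.card - 1)) / N) := by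
    intro x hx
    rw [hTS, Finset.mem_filter] at hx
    obtain ⟨hl, hr⟩ := hrange x hx.1
    rw [Finset.mem_Icc]
    exact ⟨Nat.div_le_div_right hl, Nat.div_le_div_right hr⟩
  have hcard : TS.card ≤ (Finset.Icc (rA x₀ / N) ((rA x₀ + (S.card - 1)) / N)).card :=
    Finset.card_le_card_of_injOn _ hmaps hinj2
  rw [Nat.card_Icc] at hcard
  have hdiv := nat_div_add (rA x₀) (S.card - 1) N hN
  have hd2 : (S.card - 1) / N ≤ S.card / N := Nat.div_le_div_right (Nat.sub_le _ _)
  have hge : rA x₀ / N ≤ (rA x₀ + (S.card - 1)) / N := Nat.div_le_div_right (Nat.le_add_right _ _)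
  omega

variable (hm : 0 < m)

def Fm (x : EuclideanSpace ℝ (Fin m)) : ℕ → ℤ :=
  fun k => ⌊(2:ℝ) ^ (k / m) * x ⟨k % m, Nat.mod_lt k hm⟩⌋

lemma Fm_apply (x : EuclideanSpace ℝ (Fin m)) (j : ℕ) (i : Fin m) :
    Fm hm x (i.val + j * m) = ⌊(2:ℝ) ^ j * x i⌋ := by
  unfold Fm
  have h1 : (i.val + j * m) / m = j := by
    rw [Nat.add_mul_div_right _ _ hm, Nat.div_eq_of_lt i.isLt, zero_add]
  have h2 : (i.val + j * m) % m = i.val := by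
    rw [Nat.add_mul_mod_self_right, Nat.mod_eq_of_lt i.isLt]
  have h3 : (⟨(i.val + j * m) % m, Nat.mod_lt _ hm⟩ : Fin m) = i := Fin.ext h2
  rw [h1, h3]

lemma Fm_agree {x y : EuclideanSpace ℝ (Fin m)} {j : ℕ}
    (hj : ∀ i : Fin m, ⌊(2:ℝ) ^ j * x i⌋ = ⌊(2:ℝ) ^ j * y i⌋) :
    ∀ k, k < (j + 1) * m → Fm hm x k = Fm hm y k := by
  intro k hk
  have hkm : k / m ≤ j := by
    have : k / m < j + 1 := Nat.div_lt_iff_lt_mul hm |>.2 (by omega)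
    omega
  exact floor_det hkm (hj ⟨k % m, Nat.mod_lt k hm⟩)

lemma Fm_inj {x y : EuclideanSpace ℝ (Fin m)} (h : ∀ k, Fm hm x k = Fm hm y k) : x = y := by
  ext i
  by_contra hne
  have hd : 0 < |x i - y i| := abs_pos.2 (sub_ne_zero.2 hne)
  obtain ⟨j, hj⟩ := pow_unbounded_of_one_lt (1 / |x i - y i|) (by norm_num : (1:ℝ) < 2)
  have hfl : ⌊(2:ℝ) ^ j * x i⌋ = ⌊(2:ℝ) ^ j * y i⌋ := by
    have := h (i.val + j * m)
    rwa [Fm_apply hm x j i, Fm_apply hm y j i] at this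
  have h1 : |(2:ℝ) ^ j * x i - (2:ℝ) ^ j * y i| < 1 := abs_lt_one_of_floor_eq hfl
  rw [← mul_sub, abs_mul, abs_of_pos (by positivity : (0:ℝ) < (2:ℝ)^j)] at h1
  rw [div_lt_iff₀ hd] at hj
  nlinarith

lemma cardA_le {A : Finset (EuclideanSpace ℝ (Fin m))} {δ M s : ℝ} (hδ : 0 < δ) (hδ1 : δ ≤ 1)
    (hcube : ∀ x ∈ A, ∀ i, x i ∈ Set.Icc (0 : ℝ) 1)
    (hyp : ∀ (c : EuclideanSpace ℝ (Fin m)) (r : ℝ), δ ≤ r → r ≤ 1 →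
      (Set.ncard ((A : Set (EuclideanSpace ℝ (Fin m))) ∩ closedBall c r) : ℝ) ≤ M * (r / δ) ^ s) :
    (A.card : ℝ) ≤ ((m : ℝ) + 1) ^ m * (M * (1 / δ) ^ s) := by
  classical
  set v : EuclideanSpace ℝ (Fin m) → (Fin m → Fin (m + 1)) := fun x i =>
    ⟨min (⌊((m : ℝ) + 1) * x i⌋).toNat m, by omega⟩ with hv
  have hfib := Finset.card_eq_sum_card_fiberwise
    (f := v) (s := A) (t := Finset.univ) (fun x _ => Finset.mem_univ _)
  have hfibbd : ∀ v₀ : Fin m → Fin (m + 1),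
      ((A.filter (fun x => v x = v₀)).card : ℝ) ≤ M * (1 / δ) ^ s := by
    intro v₀
    set z : EuclideanSpace ℝ (Fin m) := WithLp.toLp 2 (fun i => ((v₀ i : ℕ) : ℝ) / ((m : ℝ) + 1)) with hz
    have hsub : A.filter (fun x => v x = v₀) ⊆ A.filter (fun x => x ∈ closedBall z 1) := by
      intro x hx
      rw [Finset.mem_filter] at hx ⊢
      refine ⟨hx.1, ?_⟩
      have hxc := hcube x hx.1
      have hcd : ∀ i, |x i - z i| ≤ 1 / ((m : ℝ) + 1) := by
        intro i
        have hzi : z i = ((v₀ i : ℕ) : ℝ) / ((m : ℝ) + 1) := rfl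
        have hq : (v₀ i : ℕ) = min (⌊((m : ℝ) + 1) * x i⌋).toNat m := by
          rw [← hx.2]
        have hm1 : (0 : ℝ) < (m : ℝ) + 1 := by positivity
        have hx0 : (0 : ℝ) ≤ x i := (hxc i).1
        have hx1 : x i ≤ 1 := (hxc i).2
        have hu0 : 0 ≤ ⌊((m : ℝ) + 1) * x i⌋ := Int.floor_nonneg.2 (by positivity)
        have h2 : (((⌊((m : ℝ) + 1) * x i⌋).toNat : ℕ) : ℝ) = ((⌊((m : ℝ) + 1) * x i⌋ : ℤ) : ℝ) := by
          exact_mod_cast Int.toNat_of_nonneg hu0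
        have hql : ((v₀ i : ℕ) : ℝ) ≤ ((m : ℝ) + 1) * x i := by
          rw [hq]
          have h1 : ((min (⌊((m : ℝ) + 1) * x i⌋).toNat m : ℕ) : ℝ) ≤ ((⌊((m : ℝ) + 1) * x i⌋).toNat : ℝ) := by
            exact_mod_cast Nat.cast_le.2 (min_le_left _ _)
          calc ((min (⌊((m : ℝ) + 1) * x i⌋).toNat m : ℕ) : ℝ) ≤ _ := h1
            _ = _ := h2
            _ ≤ ((m : ℝ) + 1) * x i := Int.floor_le _
        have hqu : ((m : ℝ) + 1) * x i ≤ ((v₀ i : ℕ) : ℝ) + 1 := by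
          rw [hq]
          rcases le_or_gt (⌊((m : ℝ) + 1) * x i⌋).toNat m with h | h
          · rw [min_eq_left h, h2]
            linarith [Int.lt_floor_add_one (((m : ℝ) + 1) * x i)]
          · rw [min_eq_right (le_of_lt h)]
            push_cast
            nlinarith
        have ha : ((v₀ i : ℕ) : ℝ) / ((m : ℝ) + 1) ≤ x i := by
          rw [div_le_iff₀ hm1]; nlinarith
        have hb : x i ≤ (((v₀ i : ℕ) : ℝ) + 1) / ((m : ℝ) + 1) := by
          rw [le_div_iff₀ hm1]; nlinarith
        rw [hzi, abs_le]
        have hpos : (0:ℝ) ≤ 1 / ((m : ℝ) + 1) := by positivity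
        constructor
        · linarith
        · rw [sub_le_iff_le_add]
          calc x i ≤ (((v₀ i : ℕ) : ℝ) + 1) / ((m : ℝ) + 1) := hb
            _ = 1 / ((m : ℝ) + 1) + ((v₀ i : ℕ) : ℝ) / ((m : ℝ) + 1) := by ring
      have hdist : dist x z ≤ Real.sqrt m * (1 / ((m : ℝ) + 1)) := dist_le_of_coords (by positivity) hcd
      have hsq : Real.sqrt m ≤ (m : ℝ) + 1 := by
        rw [show ((m : ℝ) + 1) = Real.sqrt (((m : ℝ) + 1) ^ 2) from (Real.sqrt_sq (by positivity)).symm]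
        apply Real.sqrt_le_sqrt
        nlinarith [sq_nonneg ((m : ℝ))]
      rw [mem_closedBall]
      calc dist x z ≤ Real.sqrt m * (1 / ((m : ℝ) + 1)) := hdist
        _ ≤ ((m : ℝ) + 1) * (1 / ((m : ℝ) + 1)) := by
            apply mul_le_mul_of_nonneg_right hsq (by positivity)
        _ = 1 := by field_simp
    calc ((A.filter (fun x => v x = v₀)).card : ℝ)
        ≤ ((A.filter (fun x => x ∈ closedBall z 1)).card : ℝ) := by
          exact_mod_cast Nat.cast_le.2 (Finset.card_le_card hsub)
      _ = (Set.ncard ((A : Set (EuclideanSpace ℝ (Fin m))) ∩ closedBall z 1) : ℝ) := by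
          rw [ncard_inter]
      _ ≤ M * (1 / δ) ^ s := hyp z 1 hδ1 (le_refl 1)
  calc (A.card : ℝ) = ∑ v₀ : Fin m → Fin (m + 1), ((A.filter (fun x => v x = v₀)).card : ℝ) := by
        rw [hfib]; push_cast; rfl
    _ ≤ ∑ _v₀ : Fin m → Fin (m + 1), M * (1 / δ) ^ s := Finset.sum_le_sum (fun v₀ _ => hfibbd v₀)
    _ = ((m : ℝ) + 1) ^ m * (M * (1 / δ) ^ s) := by
        rw [Finset.sum_const, Finset.card_univ, Fintype.card_fun, nsmul_eq_mul]
        congr 1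
        rw [Fintype.card_fin, Fintype.card_fin]
        push_cast
        ring

lemma greedy {A : Finset (EuclideanSpace ℝ (Fin m))} {δ s τ Kb : ℝ} (hδ : 0 < δ) (hs : 0 ≤ s)
    (hball : ∀ x : EuclideanSpace ℝ (Fin m),
      ((A.filter (fun y => y ∈ closedBall x (2 * τ))).card : ℝ) ≤ Kb) :
    ∃ χ : EuclideanSpace ℝ (Fin m) → ℕ,
      (∀ x ∈ A, χ x < ⌊Kb⌋₊ + 1) ∧
      ∀ i : ℕ, ∀ (c : EuclideanSpace ℝ (Fin m)) (r : ℝ), δ ≤ r → r ≤ 1 → r ≤ τ →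
        (((A.filter (fun y => χ y = i)).filter (fun y => y ∈ closedBall c r)).card : ℝ)
          ≤ (r / δ) ^ s := by
  classical
  set N₁ := ⌊Kb⌋₊ + 1 with hN₁
  suffices h : ∀ A' : Finset (EuclideanSpace ℝ (Fin m)), A' ⊆ A →
      ∃ χ : EuclideanSpace ℝ (Fin m) → ℕ,
        (∀ x ∈ A', χ x < N₁) ∧
        ∀ i : ℕ, ∀ (c : EuclideanSpace ℝ (Fin m)) (r : ℝ), δ ≤ r → r ≤ 1 → r ≤ τ →
          (((A'.filter (fun y => χ y = i)).filter (fun y => y ∈ closedBall c r)).card : ℝ)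
            ≤ (r / δ) ^ s by
    exact h A (Finset.Subset.refl A)
  intro A'
  induction A' using Finset.induction_on with
  | empty =>
    intro _
    refine ⟨fun _ => 0, by simp, ?_⟩
    intro i c r hr1 _ _
    have : (1 : ℝ) ≤ r / δ := (one_le_div hδ).2 hr1
    simp only [Finset.filter_empty, Finset.card_empty, Nat.cast_zero]
    positivity
  | @insert x A' hxA' ih =>
    intro hsub
    have hsub' : A' ⊆ A := fun y hy => hsub (Finset.mem_insert_of_mem hy)
    have hxA : x ∈ A := hsub (Finset.mem_insert_self x A')
    obtain ⟨χ, hχlt, hχgood⟩ := ih hsub'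
    -- find a free color
    have hfree : ∃ i₀ < N₁, ∀ (c : EuclideanSpace ℝ (Fin m)) (r : ℝ), δ ≤ r → r ≤ 1 → r ≤ τ →
        (((insert x (A'.filter (fun y => χ y = i₀))).filter
          (fun y => y ∈ closedBall c r)).card : ℝ) ≤ (r / δ) ^ s := by
      by_contra hcon
      push_neg at hcon
      have hwit : ∀ i : ℕ, ∃ y, i < N₁ →
          y ∈ A.filter (fun y => y ∈ closedBall x (2 * τ)) ∧ χ y = i := by
        intro i
        by_cases hi : i < N₁
        swap
        · exact ⟨x, fun h => absurd h hi⟩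
        suffices hh : ∃ y, y ∈ A.filter (fun y => y ∈ closedBall x (2 * τ)) ∧ χ y = i by
          obtain ⟨y, hy⟩ := hh; exact ⟨y, fun _ => hy⟩
        obtain ⟨c, r, hr1, hr2, hr3, hbad⟩ := hcon i hi
        have hone : (1 : ℝ) ≤ (r / δ) ^ s :=
          Real.one_le_rpow ((one_le_div hδ).2 hr1) hs
        have hxball : x ∈ closedBall c r := by
          by_contra hxb
          have heq : (insert x (A'.filter (fun y => χ y = i))).filter
              (fun y => y ∈ closedBall c r) =
              (A'.filter (fun y => χ y = i)).filter (fun y => y ∈ closedBall c r) := by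
            rw [Finset.filter_insert, if_neg hxb]
          rw [heq] at hbad
          exact absurd (hχgood i c r hr1 hr2 hr3) (not_le.2 hbad)
        have hpos : 0 < ((A'.filter (fun y => χ y = i)).filter
            (fun y => y ∈ closedBall c r)).card := by
          rw [Nat.pos_iff_ne_zero]
          intro h0
          rw [Finset.filter_insert, if_pos hxball] at hbad
          have hle : ((insert x ((A'.filter (fun y => χ y = i)).filter
              (fun y => y ∈ closedBall c r))).card : ℝ) ≤ 1 := by
            have h1 := Finset.card_insert_le x
              ((A'.filter (fun y => χ y = i)).filter (fun y => y ∈ closedBall c r))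
            rw [h0] at h1
            exact_mod_cast h1
          linarith
        obtain ⟨y, hy⟩ := Finset.card_pos.1 hpos
        rw [Finset.mem_filter, Finset.mem_filter] at hy
        refine ⟨y, ?_, hy.1.2⟩
        rw [Finset.mem_filter]
        refine ⟨hsub' hy.1.1, ?_⟩
        rw [mem_closedBall]
        calc dist y x ≤ dist y c + dist x c := dist_triangle_right _ _ _
          _ ≤ r + r := add_le_add (mem_closedBall.1 hy.2) (mem_closedBall.1 hxball)
          _ ≤ 2 * τ := by linarith
      choose g hg using hwit
      have hcard : N₁ ≤ (A.filter (fun y => y ∈ closedBall x (2 * τ))).card := by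
        have h1 : (Finset.range N₁).card ≤ (A.filter (fun y => y ∈ closedBall x (2 * τ))).card := by
          apply Finset.card_le_card_of_injOn g
          · intro i hi
            exact (hg i (Finset.mem_range.1 hi)).1
          · intro i hi i' hi' he
            rw [Finset.mem_coe, Finset.mem_range] at hi hi'
            rw [← (hg i hi).2, ← (hg i' hi').2, he]
        rwa [Finset.card_range] at h1
      have h2 : (N₁ : ℝ) ≤ Kb := le_trans (by exact_mod_cast hcard) (hball x)
      have h3 : Kb < N₁ := by
        rw [hN₁]
        exact_mod_cast Nat.lt_floor_add_one Kb
      linarith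
    obtain ⟨i₀, hi₀lt, hi₀⟩ := hfree
    refine ⟨Function.update χ x i₀, ?_, ?_⟩
    · intro y hy
      rcases Finset.mem_insert.1 hy with rfl | hy'
      · rw [Function.update_self]; exact hi₀lt
      · rw [Function.update_of_ne (by rintro rfl; exact hxA' hy')]
        exact hχlt y hy'
    · intro i c r hr1 hr2 hr3
      have hfcongr : A'.filter (fun y => Function.update χ x i₀ y = i) =
          A'.filter (fun y => χ y = i) := by
        apply Finset.filter_congr
        intro y hy
        rw [Function.update_of_ne (by rintro rfl; exact hxA' hy)]
      by_cases hii : i = i₀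
      · subst hii
        have heq : (insert x A').filter (fun y => Function.update χ x i y = i) =
            insert x (A'.filter (fun y => χ y = i)) := by
          rw [Finset.filter_insert, if_pos (by rw [Function.update_self])]
          rw [hfcongr]
        rw [heq]
        exact hi₀ c r hr1 hr2 hr3
      · have heq : (insert x A').filter (fun y => Function.update χ x i₀ y = i) =
            A'.filter (fun y => χ y = i) := by
          rw [Finset.filter_insert, if_neg (by rw [Function.update_self]; exact Ne.symm hii)]
          rw [hfcongr]
        rw [heq]
        exact hχgood i c r hr1 hr2 hr3

end
end Stmt6

set_option maxHeartbeats 3200000 in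
open Finset Metric in
theorem stmt_6 (m : ℕ) (s : ℝ) (hs : 0 ≤ s) :
    ∃ C : ℝ, 0 < C ∧
      ∀ (A : Finset (EuclideanSpace ℝ (Fin m))) (δ M : ℝ),
        0 < δ → δ ≤ 1 → 1 ≤ M →
        (∀ x ∈ A, ∀ i, x i ∈ Set.Icc (0 : ℝ) 1) →
        (∀ (c : EuclideanSpace ℝ (Fin m)) (r : ℝ), δ ≤ r → r ≤ 1 →
          (Set.ncard ((A : Set (EuclideanSpace ℝ (Fin m))) ∩ Metric.closedBall c r) : ℝ)
            ≤ M * (r / δ) ^ s) →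
        ∃ P : Finset (Finset (EuclideanSpace ℝ (Fin m))),
          (P.card : ℝ) ≤ C * M ^ C ∧
          (∀ B ∈ P, B ⊆ A) ∧
          (∀ x ∈ A, ∃! B, B ∈ P ∧ x ∈ B) ∧
          ∀ B ∈ P, ∀ (c : EuclideanSpace ℝ (Fin m)) (r : ℝ), δ ≤ r → r ≤ 1 →
            (Set.ncard ((B : Set (EuclideanSpace ℝ (Fin m))) ∩ Metric.closedBall c r) : ℝ)
              ≤ (r / δ) ^ s := by
  classical
  rcases Nat.eq_zero_or_pos m with hm0 | hm
  · -- m = 0 : the space is a single point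
    subst hm0
    refine ⟨1, one_pos, ?_⟩
    intro A δ M hδ hδ1 hM hcube hyp
    refine ⟨{A}, ?_, ?_, ?_, ?_⟩
    · simp only [Finset.card_singleton, Nat.cast_one, one_mul]
      calc (1:ℝ) ≤ M := hM
        _ = M ^ (1:ℝ) := (Real.rpow_one M).symm
    · intro B hB; rw [Finset.mem_singleton] at hB; rw [hB]
    · intro x hx
      refine ⟨A, ⟨Finset.mem_singleton_self A, hx⟩, ?_⟩
      rintro B ⟨hB, _⟩; rwa [Finset.mem_singleton] at hB
    · intro B hB c r hr1 hr2
      rw [Finset.mem_singleton] at hB; rw [hB]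
      rw [Stmt6.ncard_inter]
      have h1 : (A.filter (fun x => x ∈ closedBall c r)).card ≤ A.card :=
        Finset.card_le_card (Finset.filter_subset _ _)
      have h2 : A.card ≤ 1 := Finset.card_le_one.2
        (fun a _ b _ => by ext i; exact i.elim0)
      have h3 : (1:ℝ) ≤ (r/δ)^s := Real.one_le_rpow ((one_le_div hδ).2 hr1) hs
      calc ((A.filter (fun x => x ∈ closedBall c r)).card : ℝ) ≤ 1 := by
            exact_mod_cast le_trans h1 h2
        _ ≤ (r/δ)^s := h3
  rcases eq_or_lt_of_le hs with hs0 | hsp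
  · -- s = 0 : partition into singletons
    refine ⟨((m:ℝ)+1)^m + 1, by positivity, ?_⟩
    intro A δ M hδ hδ1 hM hcube hyp
    refine ⟨A.image (fun x => ({x} : Finset _)), ?_, ?_, ?_, ?_⟩
    · have h1 : ((A.image (fun x => ({x} : Finset _))).card : ℝ) ≤ (A.card : ℝ) := by
        exact_mod_cast Finset.card_image_le
      have h2 := Stmt6.cardA_le hδ hδ1 hcube hyp
      rw [← hs0, Real.rpow_zero, mul_one] at h2
      have hC1 : (1:ℝ) ≤ ((m:ℝ)+1)^m + 1 := by
        have : (0:ℝ) ≤ ((m:ℝ)+1)^m := by positivity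
        linarith
      have h4 : M ≤ M ^ (((m:ℝ)+1)^m + 1) := by
        calc M = M ^ (1:ℝ) := (Real.rpow_one M).symm
          _ ≤ _ := Real.rpow_le_rpow_of_exponent_le hM hC1
      have h5 : (0:ℝ) ≤ ((m:ℝ)+1)^m := by positivity
      have h6 : (0:ℝ) < M ^ (((m:ℝ)+1)^m + 1) :=
        Real.rpow_pos_of_pos (lt_of_lt_of_le one_pos hM) _
      nlinarith
    · intro B hB
      obtain ⟨a, ha, rfl⟩ := Finset.mem_image.1 hB
      exact Finset.singleton_subset_iff.2 ha
    · intro x hx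
      refine ⟨{x}, ⟨Finset.mem_image_of_mem _ hx, Finset.mem_singleton_self x⟩, ?_⟩
      rintro B ⟨hB, hxB⟩
      obtain ⟨a, _, rfl⟩ := Finset.mem_image.1 hB
      rw [Finset.mem_singleton] at hxB
      rw [hxB]
    · intro B hB c r hr1 hr2
      obtain ⟨a, _, rfl⟩ := Finset.mem_image.1 hB
      rw [Stmt6.ncard_inter]
      have h1 : (({a} : Finset _).filter (fun x => x ∈ closedBall c r)).card ≤ 1 := by
        calc _ ≤ ({a} : Finset _).card := Finset.card_le_card (Finset.filter_subset _ _)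
          _ = 1 := Finset.card_singleton a
      have h3 : (1:ℝ) ≤ (r/δ)^s := Real.one_le_rpow ((one_le_div hδ).2 hr1) hs
      calc ((({a} : Finset _).filter (fun x => x ∈ closedBall c r)).card : ℝ) ≤ 1 := by
            exact_mod_cast h1
        _ ≤ (r/δ)^s := h3
  -- main case : m ≥ 1, s > 0
  have hm1 : (1:ℝ) ≤ (m:ℝ) := by exact_mod_cast hm
  set G : ℝ := ((m:ℝ)+1)^m with hG
  have hG1 : (1:ℝ) ≤ G := one_le_pow₀ (by linarith)
  have hsqrt1 : (1:ℝ) ≤ Real.sqrt m := by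
    rw [show (1:ℝ) = Real.sqrt 1 from (Real.sqrt_one).symm]
    exact Real.sqrt_le_sqrt hm1
  have h3m1 : (1:ℝ) ≤ 3^m := one_le_pow₀ (by norm_num)
  have h4s : (1:ℝ) ≤ (4*Real.sqrt m)^s := Real.one_le_rpow (by linarith) hs
  set C₁ : ℝ := G * (4*Real.sqrt m)^s with hC₁
  have hC₁1 : (1:ℝ) ≤ C₁ := by
    calc (1:ℝ) = 1*1 := by ring
      _ ≤ G * (4*Real.sqrt m)^s := mul_le_mul hG1 h4s one_pos.le (by linarith)
  set ρ : ℝ := (4*(3:ℝ)^m) ^ (1/s) with hρ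
  have hρ1 : (1:ℝ) ≤ ρ := Real.one_le_rpow (by linarith) (by positivity)
  have hρs : ρ ^ s = 4*(3:ℝ)^m := by
    rw [hρ, ← Real.rpow_mul (by linarith), one_div_mul_cancel (ne_of_gt hsp), Real.rpow_one]
  have h2ρs1 : (1:ℝ) ≤ (2*ρ)^s := Real.one_le_rpow (by linarith) hs
  set C₃ : ℝ := G * (2*ρ)^s with hC₃
  have hC₃1 : (1:ℝ) ≤ C₃ := by
    calc (1:ℝ) = 1*1 := by ring
      _ ≤ G * (2*ρ)^s := mul_le_mul hG1 h2ρs1 one_pos.le (by linarith)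
  set K : ℝ := (C₃+1) * (2*3^m*C₁+1) with hK
  have hKpos : 0 < K := by
    have : (0:ℝ) < 2*3^m*C₁+1 := by nlinarith
    nlinarith
  refine ⟨K + 2, by linarith, ?_⟩
  intro A δ M hδ hδ1 hM hcube hyp
  have hone : ∀ r : ℝ, δ ≤ r → (1:ℝ) ≤ (r/δ)^s :=
    fun r hr => Real.one_le_rpow ((one_le_div hδ).2 hr) hs
  have hAcard := Stmt6.cardA_le hδ hδ1 hcube hyp
  -- greedy coloring for small scales
  have hball : ∀ x : EuclideanSpace ℝ (Fin m),
      ((A.filter (fun y => y ∈ closedBall x (2*(ρ*δ)))).card : ℝ) ≤ C₃*M := by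
    intro x
    rcases le_or_gt (2*(ρ*δ)) 1 with h1 | h1
    · have hge : δ ≤ 2*(ρ*δ) := by nlinarith
      have h2 := hyp x (2*(ρ*δ)) hge h1
      rw [Stmt6.ncard_inter] at h2
      have h3 : (2*(ρ*δ))/δ = 2*ρ := by field_simp
      rw [h3] at h2
      have h2ρ0 : (0:ℝ) ≤ (2*ρ)^s * M :=
        mul_nonneg (Real.rpow_nonneg (by linarith) s) (by linarith)
      calc _ ≤ M*(2*ρ)^s := h2
        _ = 1*((2*ρ)^s*M) := by ring
        _ ≤ G*((2*ρ)^s*M) := mul_le_mul_of_nonneg_right hG1 h2ρ0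
        _ = C₃*M := by rw [hC₃]; ring
    · have h2 : ((A.filter (fun y => y ∈ closedBall x (2*(ρ*δ)))).card : ℝ) ≤ (A.card : ℝ) := by
        exact_mod_cast Finset.card_le_card (Finset.filter_subset _ _)
      have h4 : (1/δ) ≤ 2*ρ := by rw [div_le_iff₀ hδ]; nlinarith
      have h5 : (1/δ)^s ≤ (2*ρ)^s := Real.rpow_le_rpow (by positivity) h4 hs
      have h6 : (0:ℝ) ≤ (1/δ)^s := Real.rpow_nonneg (by positivity) s
      calc ((A.filter (fun y => y ∈ closedBall x (2*(ρ*δ)))).card : ℝ) ≤ (A.card : ℝ) := h2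
        _ ≤ G * (M * (1/δ)^s) := hAcard
        _ ≤ G * (M * (2*ρ)^s) := by
            have hG0 : (0:ℝ) ≤ G := by linarith
            have hM0 : (0:ℝ) ≤ M := by linarith
            exact mul_le_mul_of_nonneg_left (mul_le_mul_of_nonneg_left h5 hM0) hG0
        _ = C₃*M := by rw [hC₃]; ring
  obtain ⟨χ, hχlt, hχgood⟩ := Stmt6.greedy (τ := ρ*δ) hδ hs hball
  set N₁ : ℕ := ⌊C₃*M⌋₊ + 1 with hN₁
  set N₂ : ℕ := ⌊2*3^m*C₁*M⌋₊ + 1 with hN₂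
  have hN₂pos : 0 < N₂ := Nat.succ_pos _
  have hN₂gt : 2*3^m*C₁*M < (N₂:ℝ) := by
    rw [hN₂]; push_cast; exact Nat.lt_floor_add_one _
  have hM0 : (0:ℝ) ≤ M := by linarith
  have hN₁le : (N₁:ℝ) ≤ (C₃+1)*M := by
    have hfl := Nat.floor_le (mul_nonneg (by linarith : (0:ℝ) ≤ C₃) hM0)
    have e : (C₃+1)*M = C₃*M + M := by ring
    rw [hN₁]; push_cast; linarith
  have hN₂le : (N₂:ℝ) ≤ (2*3^m*C₁+1)*M := by
    have hfl := Nat.floor_le (mul_nonneg (by positivity : (0:ℝ) ≤ 2*3^m*C₁) hM0)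
    have e : (2*3^m*C₁+1)*M = 2*3^m*C₁*M + M := by ring
    rw [hN₂]; push_cast; linarith
  set FL : EuclideanSpace ℝ (Fin m) → Lex (ℕ → ℤ) := fun x => toLex (Stmt6.Fm hm x) with hFL
  set rk : EuclideanSpace ℝ (Fin m) → ℕ :=
    fun x => (A.filter (fun y => FL y < FL x)).card with hrk
  have hFLinj : ∀ x ∈ A, ∀ y ∈ A, FL x = FL y → x = y := by
    intro x _ y _ h
    exact Stmt6.Fm_inj hm (fun k => congrFun (toLex.injective h) k)
  set D : ℕ × ℕ → Finset (EuclideanSpace ℝ (Fin m)) :=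
    fun p => A.filter (fun x => χ x = p.1 ∧ rk x % N₂ = p.2) with hD
  refine ⟨(Finset.range N₁ ×ˢ Finset.range N₂).image D, ?_, ?_, ?_, ?_⟩
  · -- cardinality bound
    have h1 : ((Finset.range N₁ ×ˢ Finset.range N₂).image D).card ≤ N₁ * N₂ := by
      calc _ ≤ (Finset.range N₁ ×ˢ Finset.range N₂).card := Finset.card_image_le
        _ = N₁ * N₂ := by rw [Finset.card_product, Finset.card_range, Finset.card_range]
    have h2 : (N₁:ℝ) ≤ (C₃+1)*M := hN₁le
    have h3 : (N₂:ℝ) ≤ (2*3^m*C₁+1)*M := hN₂le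
    have e2 : M^(2:ℝ) = M*M := by
      rw [show (2:ℝ) = ((2:ℕ):ℝ) from by norm_num, Real.rpow_natCast]
      ring
    have h4 : ((N₁*N₂ : ℕ):ℝ) ≤ K * M^(2:ℝ) := by
      rw [Nat.cast_mul, e2]
      calc (N₁:ℝ)*(N₂:ℝ) ≤ ((C₃+1)*M) * ((2*3^m*C₁+1)*M) := by
            apply mul_le_mul h2 h3 (by positivity) (mul_nonneg (by linarith) (by linarith))
        _ = K * (M*M) := by rw [hK]; ring
    have h6 : M^(2:ℝ) ≤ M^(K+2) := Real.rpow_le_rpow_of_exponent_le hM (by linarith)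
    have h7 : (0:ℝ) < M^(K+2) := Real.rpow_pos_of_pos (by linarith) _
    calc (((Finset.range N₁ ×ˢ Finset.range N₂).image D).card : ℝ) ≤ ((N₁*N₂ : ℕ):ℝ) := by
          exact_mod_cast h1
      _ ≤ K * M^(2:ℝ) := h4
      _ ≤ K * M^(K+2) := mul_le_mul_of_nonneg_left h6 (le_of_lt hKpos)
      _ ≤ (K+2) * M^(K+2) := mul_le_mul_of_nonneg_right (by linarith) (le_of_lt h7)
  · -- subsets
    intro B hB
    obtain ⟨p, _, rfl⟩ := Finset.mem_image.1 hB
    exact Finset.filter_subset _ _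
  · -- partition
    intro x hx
    have hx1 : χ x < N₁ := hχlt x hx
    have hx2 : rk x % N₂ < N₂ := Nat.mod_lt _ hN₂pos
    refine ⟨D (χ x, rk x % N₂), ⟨Finset.mem_image_of_mem D (Finset.mem_product.2
      ⟨Finset.mem_range.2 hx1, Finset.mem_range.2 hx2⟩), ?_⟩, ?_⟩
    · rw [hD]; exact Finset.mem_filter.2 ⟨hx, rfl, rfl⟩
    · rintro B ⟨hB, hxB⟩
      obtain ⟨p, -, rfl⟩ := Finset.mem_image.1 hB
      obtain ⟨p1, p2⟩ := p
      rw [hD, Finset.mem_filter] at hxB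
      obtain ⟨-, hp1, hp2⟩ := hxB
      subst hp1
      subst hp2
      rfl
  · -- the key counting bound
    intro B hB c r hr1 hr2
    obtain ⟨p, -, rfl⟩ := Finset.mem_image.1 hB
    obtain ⟨i, t⟩ := p
    rw [Stmt6.ncard_inter]
    rcases le_or_gt r (ρ*δ) with hsmall | hbig
    · -- small scales : use the greedy coloring
      have hsub : (D (i,t)).filter (fun x => x ∈ closedBall c r) ⊆
          (A.filter (fun y => χ y = i)).filter (fun y => y ∈ closedBall c r) := by
        apply Finset.filter_subset_filter
        intro y hy
        rw [hD] at hy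
        rw [Finset.mem_filter] at hy ⊢
        exact ⟨hy.1, hy.2.1⟩
      calc (((D (i,t)).filter (fun x => x ∈ closedBall c r)).card : ℝ)
          ≤ (((A.filter (fun y => χ y = i)).filter (fun y => y ∈ closedBall c r)).card : ℝ) := by
            exact_mod_cast Finset.card_le_card hsub
        _ ≤ (r/δ)^s := hχgood i c r hr1 hr2 hsmall
    · -- large scales : use the rank coloring and dyadic cells
      have hr0 : 0 < r := lt_of_lt_of_le hδ hr1
      set j : ℕ := Nat.log 2 ⌊1/(2*r)⌋₊ with hjdef
      clear_value j
      have f1 : 1/(2*r) < (2:ℝ)^(j+1) := by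
        rcases Nat.eq_zero_or_pos ⌊1/(2*r)⌋₊ with h0 | hposf
        · have h1 : 1/(2*r) < 1 := Nat.floor_eq_zero.1 h0
          have h2 : (1:ℝ) ≤ (2:ℝ)^(j+1) := one_le_pow₀ (by norm_num)
          linarith
        · have h2 : ⌊1/(2*r)⌋₊ < 2^(j+1) := by
            rw [hjdef]
            exact Nat.lt_pow_succ_log_self (by norm_num) _
          have h3 : 1/(2*r) < (⌊1/(2*r)⌋₊:ℝ) + 1 := Nat.lt_floor_add_one _
          have h4 : ((⌊1/(2*r)⌋₊:ℕ):ℝ) + 1 ≤ (((2^(j+1):ℕ)):ℝ) := by exact_mod_cast h2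
          calc 1/(2*r) < (⌊1/(2*r)⌋₊:ℝ) + 1 := h3
            _ ≤ (((2^(j+1):ℕ)):ℝ) := h4
            _ = (2:ℝ)^(j+1) := by push_cast; ring
      have h2pj : (0:ℝ) < (2:ℝ)^j := by positivity
      have f1' : (1:ℝ) ≤ (2:ℝ)^j * (4*r) := by
        rw [div_lt_iff₀ (by linarith : (0:ℝ) < 2*r)] at f1
        have e : (2:ℝ)^(j+1) = 2*(2:ℝ)^j := by ring
        rw [e] at f1
        nlinarith
      have f2 : (2:ℝ)^j * (2*r) ≤ 2 := by
        rcases Nat.eq_zero_or_pos ⌊1/(2*r)⌋₊ with h0 | hposf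
        · have hj0 : j = 0 := by rw [hjdef, h0, Nat.log_zero_right]
          rw [hj0]
          norm_num
          linarith
        · have h1 : (2:ℕ)^j ≤ ⌊1/(2*r)⌋₊ := by
            rw [hjdef]
            exact Nat.pow_log_le_self 2 (Nat.pos_iff_ne_zero.1 hposf)
          have h2 : (⌊1/(2*r)⌋₊:ℝ) ≤ 1/(2*r) := Nat.floor_le (by positivity)
          have h3 : ((2:ℝ))^j ≤ 1/(2*r) := by
            calc ((2:ℝ))^j = (((2:ℕ)^j : ℕ):ℝ) := by push_cast; ring
              _ ≤ (⌊1/(2*r)⌋₊:ℝ) := by exact_mod_cast h1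
              _ ≤ 1/(2*r) := h2
          rw [le_div_iff₀ (by linarith : (0:ℝ) < 2*r)] at h3
          linarith
      set gj : EuclideanSpace ℝ (Fin m) → (Fin m → ℤ) := fun x i' => ⌊(2:ℝ)^j * x i'⌋ with hgj
      set T := (D (i,t)).filter (fun x => x ∈ closedBall c r) with hT
      have hfib := Finset.card_eq_sum_card_fiberwise
        (f := gj) (s := T) (t := T.image gj) (fun x hx => Finset.mem_image_of_mem gj hx)
      have hcells : (T.image gj).card ≤ 3^m := by
        have hIcc : ∀ i' : Fin m,
            (Finset.Icc ⌊(2:ℝ)^j * (c i' - r)⌋ ⌊(2:ℝ)^j * (c i' + r)⌋).card ≤ 3 := by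
          intro i'
          rw [Int.card_Icc]
          have hu : ((⌊(2:ℝ)^j * (c i' + r)⌋:ℤ):ℝ) ≤ (2:ℝ)^j*(c i'+r) := Int.floor_le _
          have hl : (2:ℝ)^j*(c i'-r) - 1 < ((⌊(2:ℝ)^j * (c i' - r)⌋:ℤ):ℝ) := by
            have := Int.lt_floor_add_one ((2:ℝ)^j*(c i'-r))
            linarith
          have hd : ((⌊(2:ℝ)^j * (c i' + r)⌋:ℤ):ℝ) - ((⌊(2:ℝ)^j * (c i' - r)⌋:ℤ):ℝ) < 3 := by
            nlinarith
          have hdz : (⌊(2:ℝ)^j * (c i' + r)⌋ : ℤ) - ⌊(2:ℝ)^j * (c i' - r)⌋ < 3 := by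
            exact_mod_cast hd
          rw [Int.toNat_le]
          push_cast
          omega
        have hsub : T.image gj ⊆ Fintype.piFinset (fun i' : Fin m =>
            Finset.Icc ⌊(2:ℝ)^j * (c i' - r)⌋ ⌊(2:ℝ)^j * (c i' + r)⌋) := by
          intro v hv
          obtain ⟨x, hxT, rfl⟩ := Finset.mem_image.1 hv
          rw [Fintype.mem_piFinset]
          intro i'
          have hxball : x ∈ closedBall c r := (Finset.mem_filter.1 hxT).2
          have habs := Stmt6.abs_coord_le hxball i'
          rw [abs_le] at habs
          rw [Finset.mem_Icc]
          simp only [hgj]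
          constructor
          · exact Int.floor_le_floor (mul_le_mul_of_nonneg_left (by linarith [habs.1]) (le_of_lt h2pj))
          · exact Int.floor_le_floor (mul_le_mul_of_nonneg_left (by linarith [habs.2]) (le_of_lt h2pj))
        calc (T.image gj).card ≤ _ := Finset.card_le_card hsub
          _ = ∏ i' : Fin m, (Finset.Icc ⌊(2:ℝ)^j * (c i' - r)⌋ ⌊(2:ℝ)^j * (c i' + r)⌋).card :=
              Fintype.card_piFinset _
          _ ≤ 3^(Finset.univ (α := Fin m)).card := Finset.prod_le_pow_card _ _ _ (fun i' _ => hIcc i')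
          _ = 3^m := by rw [Finset.card_univ, Fintype.card_fin]
      have hone4 : 4*(3:ℝ)^m < (r/δ)^s := by
        have hρr : ρ < r/δ := (lt_div_iff₀ hδ).2 hbig
        calc 4*(3:ℝ)^m = ρ^s := hρs.symm
          _ < (r/δ)^s := Real.rpow_lt_rpow (by linarith) hρr hsp
      have hrpos : (0:ℝ) < (r/δ)^s := Real.rpow_pos_of_pos (by positivity) s
      have h3mpos : (0:ℝ) < (3:ℝ)^m := by positivity
      have hC₁Mpos : (0:ℝ) < C₁*M := mul_pos (by linarith) (by linarith)
      have hfibbd : ∀ v ∈ T.image gj, ((T.filter (fun x => gj x = v)).card : ℝ)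
          ≤ (r/δ)^s/(2*3^m) + 2 := by
        intro v hv
        set Sv := A.filter (fun y => gj y = v) with hSv
        have hsub1 : T.filter (fun x => gj x = v) ⊆ Sv.filter (fun x => rk x % N₂ = t) := by
          intro y hy
          rw [Finset.mem_filter] at hy
          have hyT := hy.1
          rw [hT, Finset.mem_filter] at hyT
          have hyD := hyT.1
          rw [hD, Finset.mem_filter] at hyD
          rw [Finset.mem_filter, hSv, Finset.mem_filter]
          exact ⟨⟨hyD.1, hy.2⟩, hyD.2.2⟩
        have hint : ∀ x ∈ Sv, ∀ y ∈ Sv, ∀ z ∈ A, FL x ≤ FL z → FL z ≤ FL y → z ∈ Sv := by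
          intro x hx y hy z hz h1 h2
          rw [hSv, Finset.mem_filter] at hx hy ⊢
          refine ⟨hz, ?_⟩
          have hagree : ∀ k, k < (j+1)*m → Stmt6.Fm hm x k = Stmt6.Fm hm y k := by
            apply Stmt6.Fm_agree hm
            intro i'
            have e1 := congrFun hx.2 i'
            have e2 := congrFun hy.2 i'
            simp only [hgj] at e1 e2
            rw [e1, e2]
          simp only [hFL] at h1 h2
          have hbet := Stmt6.lex_between hagree h1 h2
          funext i'
          have hmul : (j+1)*m = j*m + m := by ring
          have hk : i'.val + j*m < (j+1)*m := by
            have := i'.isLt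
            omega
          have h3 := hbet (i'.val + j*m) hk
          rw [Stmt6.Fm_apply hm z j i', Stmt6.Fm_apply hm x j i'] at h3
          have h4 := congrFun hx.2 i'
          simp only [hgj] at h4
          simp only [hgj]
          rw [h3, h4]
        have hres := Stmt6.residue_count A Sv (Finset.filter_subset _ _) FL hFLinj hint N₂ t hN₂pos
        have hres' : (Sv.filter (fun x => rk x % N₂ = t)).card ≤ Sv.card / N₂ + 2 := by
          convert hres using 5
          simp only [hrk]
          congr 1
          ext y
          simp only [Finset.mem_filter]
          exact Iff.rfl
        have hSvcard : ((Sv.card : ℕ) : ℝ) ≤ C₁*M*(r/δ)^s := by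
          rcases Sv.eq_empty_or_nonempty with he | hne
          · rw [he]
            simp only [Finset.card_empty, Nat.cast_zero]
            positivity
          obtain ⟨x₀, hx₀⟩ := hne
          have hcoord : ∀ y ∈ Sv, ∀ i' : Fin m, |y i' - x₀ i'| ≤ 4*r := by
            intro y hy i'
            have e1 : ⌊(2:ℝ)^j * y i'⌋ = ⌊(2:ℝ)^j * x₀ i'⌋ := by
              have h1 := congrFun ((Finset.mem_filter.1 hy).2) i'
              have h2 := congrFun ((Finset.mem_filter.1 hx₀).2) i'
              simp only [hgj] at h1 h2
              rw [h1, h2]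
            have h3 := Stmt6.abs_lt_one_of_floor_eq e1
            rw [← mul_sub, abs_mul, abs_of_pos h2pj] at h3
            nlinarith [abs_nonneg (y i' - x₀ i')]
          have hdist : ∀ y ∈ Sv, y ∈ closedBall x₀ (Real.sqrt m * (4*r)) := by
            intro y hy
            rw [mem_closedBall]
            exact Stmt6.dist_le_of_coords (by linarith) (hcoord y hy)
          rcases le_or_gt (Real.sqrt m * (4*r)) 1 with hcase | hcase
          · have hge : δ ≤ Real.sqrt m * (4*r) := by nlinarith
            have h5 := hyp x₀ _ hge hcase
            rw [Stmt6.ncard_inter] at h5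
            have hsub2 : Sv ⊆ A.filter (fun x => x ∈ closedBall x₀ (Real.sqrt m * (4*r))) := by
              intro y hy
              exact Finset.mem_filter.2 ⟨(Finset.mem_filter.1 hy).1, hdist y hy⟩
            have h6 : ((Sv.card:ℕ):ℝ) ≤ M * ((Real.sqrt m * (4*r))/δ)^s := by
              calc ((Sv.card:ℕ):ℝ) ≤ _ := by exact_mod_cast Finset.card_le_card hsub2
                _ ≤ _ := h5
            have e3 : (Real.sqrt m * (4*r))/δ = (4*Real.sqrt m)*(r/δ) := by
              field_simp
            rw [e3, Real.mul_rpow (by positivity) (by positivity)] at h6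
            calc ((Sv.card:ℕ):ℝ) ≤ M * ((4*Real.sqrt m)^s * (r/δ)^s) := h6
              _ = 1 * ((4*Real.sqrt m)^s * M * (r/δ)^s) := by ring
              _ ≤ G * ((4*Real.sqrt m)^s * M * (r/δ)^s) := by
                  apply mul_le_mul_of_nonneg_right hG1
                  have : (0:ℝ) ≤ (4*Real.sqrt m)^s := Real.rpow_nonneg (by positivity) s
                  positivity
              _ = C₁*M*(r/δ)^s := by rw [hC₁]; ring
          · have h6 : ((Sv.card:ℕ):ℝ) ≤ (A.card:ℝ) := by
              exact_mod_cast Finset.card_le_card (Finset.filter_subset _ _)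
            have h8 : (1/δ)^s ≤ ((4*Real.sqrt m)*(r/δ))^s := by
              apply Real.rpow_le_rpow (by positivity) ?_ hs
              rw [div_le_iff₀ hδ] at *
              have e4 : (4*Real.sqrt m)*(r/δ)*δ = Real.sqrt m * (4*r) := by
                field_simp
              rw [e4]
              linarith
            rw [Real.mul_rpow (by positivity) (by positivity)] at h8
            calc ((Sv.card:ℕ):ℝ) ≤ (A.card:ℝ) := h6
              _ ≤ G * (M * (1/δ)^s) := hAcard
              _ ≤ G * (M * ((4*Real.sqrt m)^s * (r/δ)^s)) := by
                  apply mul_le_mul_of_nonneg_left ?_ (by linarith : (0:ℝ) ≤ G)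
                  exact mul_le_mul_of_nonneg_left h8 hM0
              _ = C₁*M*(r/δ)^s := by rw [hC₁]; ring
        have hc1 : ((Sv.card / N₂ : ℕ):ℝ) ≤ (Sv.card:ℝ)/(N₂:ℝ) := Nat.cast_div_le
        have hN₂posR : (0:ℝ) < (N₂:ℝ) := by exact_mod_cast hN₂pos
        have hfrac : (Sv.card:ℝ)/(N₂:ℝ) ≤ (r/δ)^s/(2*3^m) := by
          have h9 : (Sv.card:ℝ)/(N₂:ℝ) ≤ (C₁*M*(r/δ)^s)/(N₂:ℝ) :=
            div_le_div_of_nonneg_right hSvcard hN₂posR.le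
          have h10 : (C₁*M*(r/δ)^s)/(N₂:ℝ) ≤ (C₁*M*(r/δ)^s)/(2*3^m*C₁*M) := by
            apply div_le_div_of_nonneg_left (by positivity) ?_ (le_of_lt hN₂gt)
            positivity
          have h11 : (C₁*M*(r/δ)^s)/(2*3^m*C₁*M) = (r/δ)^s/(2*3^m) := by
            field_simp
          linarith
        calc ((T.filter (fun x => gj x = v)).card : ℝ)
            ≤ ((Sv.filter (fun x => rk x % N₂ = t)).card : ℝ) := by
              exact_mod_cast Finset.card_le_card hsub1
          _ ≤ ((Sv.card / N₂ + 2 : ℕ):ℝ) := by exact_mod_cast hres'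
          _ = ((Sv.card / N₂:ℕ):ℝ) + 2 := by push_cast; ring
          _ ≤ (Sv.card:ℝ)/(N₂:ℝ) + 2 := by linarith
          _ ≤ (r/δ)^s/(2*3^m) + 2 := by linarith
      have hsum : ((T.card : ℕ):ℝ) ≤ (3:ℝ)^m * ((r/δ)^s/(2*3^m) + 2) := by
        have h1 : ((T.card : ℕ):ℝ) = ∑ v ∈ T.image gj, ((T.filter (fun x => gj x = v)).card : ℝ) := by
          rw [hfib]
          push_cast
          rfl
        rw [h1]
        calc ∑ v ∈ T.image gj, ((T.filter (fun x => gj x = v)).card : ℝ)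
            ≤ ∑ _v ∈ T.image gj, ((r/δ)^s/(2*3^m) + 2) := Finset.sum_le_sum hfibbd
          _ = ((T.image gj).card : ℝ) * ((r/δ)^s/(2*3^m) + 2) := by
              rw [Finset.sum_const, nsmul_eq_mul]
          _ ≤ (3:ℝ)^m * ((r/δ)^s/(2*3^m) + 2) := by
              apply mul_le_mul_of_nonneg_right ?_ (by positivity)
              calc ((T.image gj).card : ℝ) ≤ ((3^m : ℕ):ℝ) := by exact_mod_cast hcells
                _ = (3:ℝ)^m := by push_cast; ring
      have e : (3:ℝ)^m * ((r/δ)^s/(2*3^m) + 2) = (r/δ)^s/2 + 2*3^m := by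
        field_simp
      calc ((T.card : ℕ):ℝ) ≤ (3:ℝ)^m * ((r/δ)^s/(2*3^m) + 2) := hsum
        _ = (r/δ)^s/2 + 2*3^m := e
        _ ≤ (r/δ)^s := by linarith
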